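/- The problem of deciding, given a binary matrix M and integer k, whether at most k rows can be deleted from M so that the remaining matrix has the simultaneous consecutive ones property, is NP-hard. -/

import Mathlib

/-- A binary matrix `M` has the consecutive ones property for rows if the columns
can be linearly ordered so that the ones in every row are consecutive. -/
def HasC1PRows {α β : Type*} (M : α → β → Bool) : Prop :=
  ∃ f : β → ℕ, Function.Injective f ∧
    ∀ (i : α) (j1 j2 j3 : β), f j1 < f j2 → f j2 < f j3 →
      M i j1 = true → M i j3 = true → M i j2 = true

/-- The simultaneous consecutive ones property: C1P for rows and for columns. -/
def HasSC1P {α β : Type*} (M : α → β → Bool) : Prop :=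
  HasC1PRows M ∧ HasC1PRows (fun j i => M i j)

open List

variable {V : Type} [DecidableEq V] {G : SimpleGraph V}

lemma aux_mem_support {a b v : V} (p : G.Walk a b) {e : Sym2 V} (he : e ∈ p.edges)
    (hv : v ∈ e) : v ∈ p.support := by
  induction e using Sym2.ind with
  | _ x y =>
    rcases Sym2.mem_iff.mp hv with rfl | rfl
    · exact p.fst_mem_support_of_mem_edges he
    · exact p.snd_mem_support_of_mem_edges he

lemma aux_walk_of_chain : ∀ l : List V, l ≠ [] → l.Chain' G.Adj →
    ∃ (a b : V) (p : G.Walk a b), p.support = l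
  | [], h, _ => absurd rfl h
  | [x], _, _ => ⟨x, x, SimpleGraph.Walk.nil, rfl⟩
  | x :: y :: l, _, hc => by
    obtain ⟨hadj, hc'⟩ := List.isChain_cons_cons.mp hc
    obtain ⟨a, b, p, hp⟩ := aux_walk_of_chain (y :: l) (by simp) hc'
    have ha : a = y := by
      have h2 := p.support_eq_cons.symm.trans hp
      exact (List.cons_eq_cons.mp h2).1
    subst ha
    exact ⟨x, b, SimpleGraph.Walk.cons hadj p, by simp [hp]⟩

lemma aux_edge_idx {a b x y : V} (p : G.Walk a b) (hn : p.support.Nodup)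
    (he : s(x, y) ∈ p.edges) :
    p.support.idxOf y = p.support.idxOf x + 1 ∨
    p.support.idxOf x = p.support.idxOf y + 1 := by
  induction p with
  | nil => simp at he
  | @cons u c d h q ih =>
    rw [SimpleGraph.Walk.edges_cons, List.mem_cons] at he
    rw [SimpleGraph.Walk.support_cons] at hn ⊢
    obtain ⟨hu, hq⟩ := List.nodup_cons.mp hn
    rcases he with he | he
    · have hc0 : q.support.idxOf c = 0 := by
        rw [q.support_eq_cons, List.idxOf_cons_self]
      rcases Sym2.eq_iff.mp he with ⟨rfl, rfl⟩ | ⟨rfl, rfl⟩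
      · left
        rw [List.idxOf_cons_self, List.idxOf_cons_ne _ h.ne, hc0]
      · right
        rw [List.idxOf_cons_self, List.idxOf_cons_ne _ h.ne, hc0]
    · have hx : x ∈ q.support := q.fst_mem_support_of_mem_edges he
      have hy : y ∈ q.support := q.snd_mem_support_of_mem_edges he
      rw [List.idxOf_cons_ne _ (fun h' => hu (by rw [h']; exact hy)),
        List.idxOf_cons_ne _ (fun h' => hu (by rw [h']; exact hx))]
      rcases ih hq he with h' | h' <;> omega

lemma aux_start_edge {a b : V} (p : G.Walk a b) (hn : p.support.Nodup) {e : Sym2 V}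
    (he : e ∈ p.edges) (ha : a ∈ e) : p.edges.idxOf e = 0 := by
  cases p with
  | nil => simp at he
  | @cons _ c _ h q =>
    rw [SimpleGraph.Walk.support_cons] at hn
    obtain ⟨hu, hq⟩ := List.nodup_cons.mp hn
    rw [SimpleGraph.Walk.edges_cons]
    by_cases hh : e = s(a, c)
    · rw [hh, List.idxOf_cons_self]
    · rw [SimpleGraph.Walk.edges_cons, List.mem_cons] at he
      have heq : e ∈ q.edges := he.resolve_left hh
      exact absurd (aux_mem_support q heq ha) hu

lemma aux_edges_close {a b : V} (p : G.Walk a b) (hn : p.support.Nodup) {e1 e2 : Sym2 V}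
    {v : V} (h1 : e1 ∈ p.edges) (h2 : e2 ∈ p.edges) (hv1 : v ∈ e1) (hv2 : v ∈ e2) :
    p.edges.idxOf e2 ≤ p.edges.idxOf e1 + 1 := by
  induction p with
  | nil => simp at h1
  | @cons u c d h q ih =>
    rw [SimpleGraph.Walk.support_cons] at hn
    obtain ⟨hu, hq⟩ := List.nodup_cons.mp hn
    rw [SimpleGraph.Walk.edges_cons, List.mem_cons] at h1 h2
    rw [SimpleGraph.Walk.edges_cons]
    by_cases h2e : e2 = s(u, c)
    · rw [h2e, List.idxOf_cons_self]; omega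
    · rw [List.idxOf_cons_ne _ (Ne.symm h2e)]
      have h2q : e2 ∈ q.edges := h2.resolve_left h2e
      by_cases h1e : e1 = s(u, c)
      · subst h1e
        have hvc : v = c := by
          rcases Sym2.mem_iff.mp hv1 with rfl | rfl
          · exact absurd (aux_mem_support q h2q hv2) hu
          · rfl
        have h0 := aux_start_edge q hq h2q (hvc ▸ hv2)
        rw [List.idxOf_cons_self, h0]
      · rw [List.idxOf_cons_ne _ (Ne.symm h1e)]
        have h1q : e1 ∈ q.edges := h1.resolve_left h1e
        have := ih hq h1q h2q
        omega

lemma aux_card_conn [Fintype V] [Fintype G.edgeSet] (hG : G.Connected) :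
    Fintype.card V ≤ G.edgeFinset.card + 1 := by
  classical
  obtain ⟨v0⟩ := hG.nonempty
  have key : ∀ v : V, ∃ e : Sym2 V, v ≠ v0 →
      e ∈ G.edgeFinset ∧ ∃ u, e = s(u, v) ∧ G.dist v0 u < G.dist v0 v := by
    intro v
    by_cases hv : v = v0
    · exact ⟨s(v0, v0), fun h => absurd hv h⟩
    · obtain ⟨p, hp⟩ := hG.exists_walk_length_eq_dist v0 v
      have hd : 0 < G.dist v0 v := hG.pos_dist_of_ne (Ne.symm hv)
      have hnil : ¬ p.reverse.Nil := by
        rw [SimpleGraph.Walk.nil_iff_length_eq, SimpleGraph.Walk.length_reverse, hp]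
        omega
      obtain ⟨u, hadj, q, hq⟩ := SimpleGraph.Walk.not_nil_iff.mp hnil
      refine ⟨s(u, v), fun _ => ⟨?_, u, rfl, ?_⟩⟩
      · exact SimpleGraph.mem_edgeFinset.mpr hadj.symm
      · have hlq : q.length + 1 = G.dist v0 v := by
          have h2 := congrArg SimpleGraph.Walk.length hq
          rw [SimpleGraph.Walk.length_reverse, hp] at h2
          simp [SimpleGraph.Walk.length_cons] at h2
          omega
        have h3 : G.dist v0 u ≤ q.length := by
          have := SimpleGraph.dist_le q.reverse
          rwa [SimpleGraph.Walk.length_reverse] at this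
        omega
  choose F hF using key
  have hle : (Finset.univ.erase v0).card ≤ G.edgeFinset.card := by
    apply Finset.card_le_card_of_injOn F
    · intro v hv
      exact (hF v (Finset.ne_of_mem_erase hv)).1
    · intro v hv w hw hvw
      obtain ⟨-, uv, hev, hdv⟩ := hF v (Finset.ne_of_mem_erase (Finset.mem_coe.mp hv))
      obtain ⟨-, uw, hew, hdw⟩ := hF w (Finset.ne_of_mem_erase (Finset.mem_coe.mp hw))
      rw [hev, hew] at hvw
      rcases Sym2.eq_iff.mp hvw with ⟨h1, h2⟩ | ⟨h1, h2⟩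
      · exact h2
      · subst h1; subst h2; omega
  rw [Finset.card_erase_of_mem (Finset.mem_univ v0), Finset.card_univ] at hle
  omega

/-- Correctness of the NP-hardness reduction from Hamiltonian Path: for every
connected graph `G` with `n` vertices and `m` edges, `G` has a Hamiltonian path
iff `m - n + 1` rows can be deleted from the edge-vertex incidence matrix of `G`
to obtain a matrix with the SC1P.  (This establishes NP-hardness of the
SC1S row-deletion problem.) -/
theorem sc1s_row_deletion_NP_hard_reduction :
    ∀ (V : Type) [Fintype V] [DecidableEq V] (G : SimpleGraph V) [DecidableRel G.Adj],
      G.Connected →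
      ((∃ (a b : V) (p : G.Walk a b), p.IsHamiltonian) ↔
        ∃ S : Finset (Sym2 V), S ⊆ G.edgeFinset ∧
          S.card = G.edgeFinset.card + 1 - Fintype.card V ∧
          HasSC1P (fun (e : {e : Sym2 V // e ∈ G.edgeFinset ∧ e ∉ S}) (v : V) =>
            decide (v ∈ e.val))) := by
  intro V _ _ G _ hconn
  classical
  haveI : Nonempty V := hconn.nonempty
  have hn1 : 1 ≤ Fintype.card V := Fintype.card_pos
  constructor
  · -- Forward direction
    rintro ⟨a, b, p, hp⟩
    have hpath : p.IsPath := hp.isPath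
    have hn : p.support.Nodup := hpath.support_nodup
    have hedsub : p.edges.toFinset ⊆ G.edgeFinset := fun e he =>
      SimpleGraph.mem_edgeFinset.mpr (p.edges_subset_edgeSet (List.mem_toFinset.mp he))
    have hmem : ∀ e : {e : Sym2 V // e ∈ G.edgeFinset ∧ e ∉ G.edgeFinset \ p.edges.toFinset},
        e.val ∈ p.edges := by
      rintro ⟨e, he, hs⟩
      by_contra h
      exact hs (Finset.mem_sdiff.mpr ⟨he, fun h' => h (List.mem_toFinset.mp h')⟩)
    refine ⟨G.edgeFinset \ p.edges.toFinset, Finset.sdiff_subset, ?_, ?_, ?_⟩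
    · rw [Finset.card_sdiff_of_subset hedsub]
      have h1 : p.edges.toFinset.card = p.length := by
        rw [List.toFinset_card_of_nodup hpath.edges_nodup, SimpleGraph.Walk.length_edges]
      have h2 : p.length = Fintype.card V - 1 := hp.length_eq
      have h3 : p.edges.toFinset.card ≤ G.edgeFinset.card := Finset.card_le_card hedsub
      omega
    · -- rows
      refine ⟨fun v => p.support.idxOf v, ?_, ?_⟩
      · intro v w h
        exact (List.idxOf_inj (hp.mem_support v)).mp h
      · intro e j1 j2 j3 h12 h23 m1 m3
        exfalso
        have h12' : p.support.idxOf j1 < p.support.idxOf j2 := h12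
        have h23' : p.support.idxOf j2 < p.support.idxOf j3 := h23
        have hj1 : j1 ∈ e.val := of_decide_eq_true m1
        have hj3 : j3 ∈ e.val := of_decide_eq_true m3
        have hne : j1 ≠ j3 := fun h => by rw [h] at h12'; omega
        have heq : e.val = s(j1, j3) := (Sym2.mem_and_mem_iff hne).mp ⟨hj1, hj3⟩
        have he : s(j1, j3) ∈ p.edges := heq ▸ hmem e
        rcases aux_edge_idx p hn he with h | h <;> omega
    · -- columns
      refine ⟨fun e => p.edges.idxOf e.val, ?_, ?_⟩
      · intro e1 e2 h
        exact Subtype.ext ((List.idxOf_inj (hmem e1)).mp h)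
      · intro v e1 e2 e3 h12 h23 m1 m3
        exfalso
        have h12' : p.edges.idxOf e1.val < p.edges.idxOf e2.val := h12
        have h23' : p.edges.idxOf e2.val < p.edges.idxOf e3.val := h23
        have hv1 : v ∈ e1.val := of_decide_eq_true m1
        have hv3 : v ∈ e3.val := of_decide_eq_true m3
        have := aux_edges_close p hn (hmem e1) (hmem e3) hv1 hv3
        omega
  · -- Backward direction
    rintro ⟨S, hSsub, hScard, ⟨f, hfinj, hf⟩, -⟩
    have hnm : Fintype.card V ≤ G.edgeFinset.card + 1 := aux_card_conn hconn
    have hTcard : (G.edgeFinset \ S).card = Fintype.card V - 1 := by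
      rw [Finset.card_sdiff_of_subset hSsub, hScard]
      have := Finset.card_le_card hSsub
      omega
    set r : V → V → Prop := fun a c => f a ≤ f c with hr
    haveI : DecidableRel r := fun a c => inferInstanceAs (Decidable (f a ≤ f c))
    haveI : IsTrans V r := ⟨fun _ _ _ h1 h2 => le_trans h1 h2⟩
    haveI : IsAntisymm V r := ⟨fun _ _ h1 h2 => hfinj (le_antisymm h1 h2)⟩
    haveI : IsTotal V r := ⟨fun a c => le_total (f a) (f c)⟩
    set L := Finset.univ.sort r with hLdef
    have hmemL : ∀ v : V, v ∈ L := fun v => (Finset.mem_sort r).mpr (Finset.mem_univ v)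
    have hnodup : L.Nodup := Finset.sort_nodup _ r
    have hlen : L.length = Fintype.card V := by
      rw [hLdef, Finset.length_sort, Finset.card_univ]
    have hsorted : L.Pairwise r := Finset.pairwise_sort _ r
    have hstrict : ∀ i j : Fin L.length, i < j → f (L.get i) < f (L.get j) := by
      intro i j hij
      have h1 : r (L.get i) (L.get j) := hsorted.rel_get_of_lt hij
      refine lt_of_le_of_ne h1 (fun h => ?_)
      exact absurd (hnodup.get_inj_iff.mp (hfinj h)) (Fin.ne_of_lt hij)
    have hcons : ∀ x y : V, s(x, y) ∈ G.edgeFinset → s(x, y) ∉ S → f x < f y →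
        L.idxOf y = L.idxOf x + 1 ∧ L.idxOf y < L.length := by
      intro x y hmem hns hxy
      have hix : L.idxOf x < L.length := List.idxOf_lt_length_iff.mpr (hmemL x)
      have hiy : L.idxOf y < L.length := List.idxOf_lt_length_iff.mpr (hmemL y)
      have hgx : L.get ⟨L.idxOf x, hix⟩ = x := List.idxOf_get hix
      have hgy : L.get ⟨L.idxOf y, hiy⟩ = y := List.idxOf_get hiy
      refine ⟨?_, hiy⟩
      have hlt : L.idxOf x < L.idxOf y := by
        rcases lt_trichotomy (L.idxOf x) (L.idxOf y) with h | h | h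
        · exact h
        · exfalso
          have : x = y := by rw [← hgx, ← hgy]; congr 1; exact Fin.ext h
          rw [this] at hxy; omega
        · exfalso
          have := hstrict ⟨L.idxOf y, hiy⟩ ⟨L.idxOf x, hix⟩ h
          rw [hgx, hgy] at this; omega
      by_contra hne
      have hgap : L.idxOf x + 1 < L.idxOf y := by omega
      have hc1 : L.idxOf x + 1 < L.length := by omega
      set c := L.get ⟨L.idxOf x + 1, hc1⟩ with hcdef
      have hfc1 : f x < f c := by
        have := hstrict ⟨L.idxOf x, hix⟩ ⟨L.idxOf x + 1, hc1⟩ (by simp [Fin.lt_def])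
        rwa [hgx] at this
      have hfc2 : f c < f y := by
        have := hstrict ⟨L.idxOf x + 1, hc1⟩ ⟨L.idxOf y, hiy⟩ (by simp [Fin.lt_def, hgap])
        rwa [hgy] at this
      have hcm := hf ⟨s(x, y), hmem, hns⟩ x c y hfc1 hfc2
        (decide_eq_true (Sym2.mem_mk_left x y)) (decide_eq_true (Sym2.mem_mk_right x y))
      have hcin : c ∈ s(x, y) := of_decide_eq_true hcm
      rcases Sym2.mem_iff.mp hcin with h | h
      · rw [h] at hfc1; omega
      · rw [h] at hfc2; omega
    set φ : Fin (L.length - 1) → Sym2 V := fun i =>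
      s(L.get ⟨i.1, Nat.lt_of_lt_of_le i.2 (Nat.sub_le _ _)⟩,
        L.get ⟨i.1 + 1, by have := i.2; omega⟩) with hφdef
    have hφinj : Function.Injective φ := by
      intro i j h
      rw [hφdef] at h
      rcases Sym2.eq_iff.mp h with ⟨h1, h2⟩ | ⟨h1, h2⟩
      · have := congrArg Fin.val (hnodup.get_inj_iff.mp h1)
        exact Fin.ext this
      · have e1 := congrArg Fin.val (hnodup.get_inj_iff.mp h1)
        have e2 := congrArg Fin.val (hnodup.get_inj_iff.mp h2)
        simp only at e1 e2
        exact absurd e1 (by omega)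
    have hsubxy : ∀ x y : V, s(x, y) ∈ G.edgeFinset \ S →
        s(x, y) ∈ Finset.image φ Finset.univ := by
      intro x y he
      rw [Finset.mem_sdiff] at he
      have hadj : G.Adj x y := SimpleGraph.mem_edgeFinset.mp he.1
      have hfne : f x ≠ f y := fun h => hadj.ne (hfinj h)
      rcases hfne.lt_or_gt with hlt | hlt
      · obtain ⟨hidx, hiy⟩ := hcons x y he.1 he.2 hlt
        have hix : L.idxOf x < L.length - 1 := by omega
        refine Finset.mem_image.mpr ⟨⟨L.idxOf x, hix⟩, Finset.mem_univ _, ?_⟩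
        rw [hφdef]
        simp only
        rw [List.idxOf_get, show (⟨L.idxOf x + 1, by omega⟩ : Fin L.length)
          = ⟨L.idxOf y, hiy⟩ from Fin.ext hidx.symm, List.idxOf_get]
      · have hmem' : s(y, x) ∈ G.edgeFinset := by rw [Sym2.eq_swap]; exact he.1
        have hns' : s(y, x) ∉ S := by rw [Sym2.eq_swap]; exact he.2
        obtain ⟨hidx, hix⟩ := hcons y x hmem' hns' hlt
        have hiy : L.idxOf y < L.length - 1 := by omega
        refine Finset.mem_image.mpr ⟨⟨L.idxOf y, hiy⟩, Finset.mem_univ _, ?_⟩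
        rw [hφdef]
        simp only
        rw [List.idxOf_get, show (⟨L.idxOf y + 1, by omega⟩ : Fin L.length)
          = ⟨L.idxOf x, hix⟩ from Fin.ext hidx.symm, List.idxOf_get, Sym2.eq_swap]
    have hsub : G.edgeFinset \ S ⊆ Finset.image φ Finset.univ := by
      intro e
      exact Sym2.ind hsubxy e
    have heq : G.edgeFinset \ S = Finset.image φ Finset.univ := by
      apply Finset.eq_of_subset_of_card_le hsub
      calc (Finset.image φ Finset.univ).card ≤ (Finset.univ : Finset (Fin (L.length - 1))).card :=
            Finset.card_image_le
        _ = L.length - 1 := by simp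
        _ ≤ (G.edgeFinset \ S).card := by rw [hTcard, hlen]
    have hchain : L.Chain' G.Adj := by
      rw [show L.Chain' G.Adj ↔ L.IsChain G.Adj from Iff.rfl, List.isChain_iff_getElem]
      intro i hi
      have : φ ⟨i, by omega⟩ ∈ G.edgeFinset \ S := by
        rw [heq]
        exact Finset.mem_image_of_mem φ (Finset.mem_univ _)
      have := (Finset.mem_sdiff.mp this).1
      exact SimpleGraph.mem_edgeFinset.mp this
    have hLne : L ≠ [] := by
      intro h
      rw [h] at hlen
      simp at hlen
      omega
    obtain ⟨a, b, p, hsup⟩ := aux_walk_of_chain L hLne hchain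
    refine ⟨a, b, p, ?_⟩
    have hpath : p.IsPath := SimpleGraph.Walk.IsPath.mk' (hsup ▸ hnodup)
    exact hpath.isHamiltonian_iff.mpr (fun w => hsup ▸ hmemL w)
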